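/- Fix integers d ≥ 1 and n ≥ 1, parameters θ^(k)_{ab} ≥ 0 and μ^(k) ∈ [0,1] for k = 1,…,d, reals m_F, m_I ≥ 0, and let v : {0,…,2^d−1} → ℕ with E_c := n·∏_{k=1}^d (μ^(k))^{c_k}(1−μ^(k))^{1−c_k}, F := {c : E_c ≥ 1}, I := {c : E_c < 1}, and suppose v_c ≤ m_F·E_c for all c ∈ F and v_c ≤ m_I for all c ∈ I. Then each quadrant of the rate matrix Λ_{cc'} = v_c v_{c'} Γ_{cc'} is dominated by the corresponding proposal component: for c ∈ F and c' ∈ F, Λ_{cc'} ≤ Λ^(FF)_{cc'}; for c ∈ F and c' ∈ I, Λ_{cc'} ≤ Λ^(FI)_{cc'}; for c ∈ I and c' ∈ F, Λ_{cc'} ≤ Λ^(IF)_{cc'}; and for c ∈ I and c' ∈ I, Λ_{cc'} ≤ Λ^(II)_{cc'}. -/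

import Mathlib

/-- The `d`-fold Kronecker product `Θ⁽¹⁾ ⊗ Θ⁽²⁾ ⊗ ⋯ ⊗ Θ⁽ᵈ⁾` of `2 × 2` real
matrices (`Θ k a b` is the `(a,b)` entry of the `(k+1)`-st initiator matrix,
`a, b ∈ {0,1}`), viewed as a `2^d × 2^d` matrix indexed by `0, …, 2^d − 1`, so
that its `(c,c')` entry is `∏_k θ⁽ᵏ⁾_{c_k c'_k}` with `c_k` the binary digits of
`c` (most significant first). -/
noncomputable def kronFold : (ℕ → ℕ → ℕ → ℝ) → ℕ → ℕ → ℕ → ℝ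
  | _, 0 => fun _ _ => 1
  | Θ, (d + 1) => fun i j =>
      Θ 0 (i / 2 ^ d) (j / 2 ^ d) *
        kronFold (fun k => Θ (k + 1)) d (i % 2 ^ d) (j % 2 ^ d)

/-- The `(k+1)`-st most significant binary digit of the color `c ∈ {0,…,2^d−1}`,
i.e. `c_k = ⌊c / 2^(d−1−k)⌋ mod 2` for `k ∈ {0,…,d−1}`. -/
def bitOf (d k c : ℕ) : ℕ := c / 2 ^ (d - 1 - k) % 2

/-- `E_c`, the expected number of nodes of color `c` among `n` nodes whose
attribute bits are independent Bernoulli(`μ⁽ᵏ⁾`):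
`E_c = n · ∏_{k=1}^d (μ⁽ᵏ⁾)^{c_k} (1−μ⁽ᵏ⁾)^{1−c_k}`. -/
noncomputable def Ecol (n d : ℕ) (μ : ℕ → ℝ) (c : ℕ) : ℝ :=
  (n : ℝ) * ∏ k ∈ Finset.range d,
    μ k ^ bitOf d k c * (1 - μ k) ^ (1 - bitOf d k c)

/-- Initiator matrices `(n m_F)^{2/d} M^(FF,k)` of the frequent–frequent
proposal component, `M^(FF,k)_{ab} = μ^a(1−μ)^{1−a} μ^b(1−μ)^{1−b} θ_{ab}`. -/
noncomputable def thetaFF (d n : ℕ) (μ : ℕ → ℝ) (θ : ℕ → ℕ → ℕ → ℝ) (mF : ℝ) :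
    ℕ → ℕ → ℕ → ℝ := fun k a b =>
  ((n : ℝ) * mF) ^ ((2 : ℝ) / (d : ℝ)) *
    (μ k ^ a * (1 - μ k) ^ (1 - a) * (μ k ^ b * (1 - μ k) ^ (1 - b)) * θ k a b)

/-- Initiator matrices `(n m_F m_I)^{1/d} M^(FI,k)` of the frequent–infrequent
proposal component, `M^(FI,k)_{ab} = μ^a(1−μ)^{1−a} θ_{ab}`. -/
noncomputable def thetaFI (d n : ℕ) (μ : ℕ → ℝ) (θ : ℕ → ℕ → ℕ → ℝ) (mF mI : ℝ) :
    ℕ → ℕ → ℕ → ℝ := fun k a b =>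
  ((n : ℝ) * mF * mI) ^ ((1 : ℝ) / (d : ℝ)) *
    (μ k ^ a * (1 - μ k) ^ (1 - a) * θ k a b)

/-- Initiator matrices `(n m_I m_F)^{1/d} M^(IF,k)` of the infrequent–frequent
proposal component, `M^(IF,k)_{ab} = μ^b(1−μ)^{1−b} θ_{ab}`. -/
noncomputable def thetaIF (d n : ℕ) (μ : ℕ → ℝ) (θ : ℕ → ℕ → ℕ → ℝ) (mF mI : ℝ) :
    ℕ → ℕ → ℕ → ℝ := fun k a b =>
  ((n : ℝ) * mI * mF) ^ ((1 : ℝ) / (d : ℝ)) *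
    (μ k ^ b * (1 - μ k) ^ (1 - b) * θ k a b)

/-- Initiator matrices `(m_I)^{2/d} Θ⁽ᵏ⁾` of the infrequent–infrequent
proposal component. -/
noncomputable def thetaII (d : ℕ) (θ : ℕ → ℕ → ℕ → ℝ) (mI : ℝ) :
    ℕ → ℕ → ℕ → ℝ := fun k a b =>
  mI ^ ((2 : ℝ) / (d : ℝ)) * θ k a b

lemma bit_chop {d j : ℕ} (c : ℕ) (hj : j < d) :
    c % 2 ^ d / 2 ^ j % 2 = c / 2 ^ j % 2 := by
  rw [← Nat.mod_mul_right_div_self, ← Nat.mod_mul_right_div_self,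
    Nat.mod_mod_of_dvd]
  have : (2:ℕ) ^ j * 2 = 2 ^ (j + 1) := by ring
  rw [this]
  exact pow_dvd_pow 2 (by omega)

lemma bitOf_zero (d c : ℕ) (hc : c < 2 ^ (d + 1)) : bitOf (d + 1) 0 c = c / 2 ^ d := by
  unfold bitOf
  simp only [Nat.add_sub_cancel, Nat.sub_zero]
  exact Nat.mod_eq_of_lt (Nat.div_lt_of_lt_mul (by rw [pow_succ] at hc; linarith))

lemma bitOf_succ (d k c : ℕ) (hk : k < d) :
    bitOf (d + 1) (k + 1) c = bitOf d k (c % 2 ^ d) := by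
  unfold bitOf
  have h : d + 1 - 1 - (k + 1) = d - 1 - k := by omega
  rw [h, bit_chop c (by omega)]

lemma prod_bit_split (f : ℕ → ℕ → ℝ) (d c : ℕ) (hc : c < 2 ^ (d + 1)) :
    ∏ k ∈ Finset.range (d + 1), f k (bitOf (d + 1) k c) =
      f 0 (c / 2 ^ d) * ∏ k ∈ Finset.range d, f (k + 1) (bitOf d k (c % 2 ^ d)) := by
  rw [Finset.prod_range_succ']
  have h : ∀ k ∈ Finset.range d,
      f (k + 1) (bitOf (d + 1) (k + 1) c) = f (k + 1) (bitOf d k (c % 2 ^ d)) :=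
    fun k hk => by rw [bitOf_succ d k c (Finset.mem_range.mp hk)]
  rw [Finset.prod_congr rfl h, bitOf_zero d c hc]
  ring

lemma kronFold_nonneg (θ : ℕ → ℕ → ℕ → ℝ) (hθ : ∀ k a b, 0 ≤ θ k a b) :
    ∀ d c c', 0 ≤ kronFold θ d c c' := by
  intro d
  induction d generalizing θ with
  | zero => intro c c'; simp [kronFold]
  | succ d ih =>
    intro c c'
    simpa [kronFold] using mul_nonneg (hθ _ _ _) (ih _ (fun k a b => hθ _ _ _) _ _)

lemma kronFold_smul (s : ℝ) (θ : ℕ → ℕ → ℕ → ℝ) :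
    ∀ d c c', kronFold (fun k a b => s * θ k a b) d c c' = s ^ d * kronFold θ d c c' := by
  intro d
  induction d generalizing θ with
  | zero => intro c c'; simp [kronFold]
  | succ d ih =>
    intro c c'
    simp only [kronFold, ih (fun k => θ (k + 1))]
    ring

lemma kron_weight : ∀ (d : ℕ) (f g : ℕ → ℕ → ℝ) (θ : ℕ → ℕ → ℕ → ℝ) (c c' : ℕ),
    c < 2 ^ d → c' < 2 ^ d →
    kronFold (fun k a b => f k a * g k b * θ k a b) d c c' =
      (∏ k ∈ Finset.range d, f k (bitOf d k c)) *
      (∏ k ∈ Finset.range d, g k (bitOf d k c')) * kronFold θ d c c' := by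
  intro d
  induction d with
  | zero => intros; simp [kronFold]
  | succ d ih =>
    intro f g θ c c' hc hc'
    have hp : 0 < 2 ^ d := Nat.pow_pos (by norm_num)
    simp only [kronFold]
    rw [ih (fun k => f (k + 1)) (fun k => g (k + 1)) (fun k => θ (k + 1)) _ _
      (Nat.mod_lt _ hp) (Nat.mod_lt _ hp)]
    rw [prod_bit_split f d c hc, prod_bit_split g d c' hc']
    ring

lemma rpow_div_pow (x : ℝ) (hx : 0 ≤ x) (m d : ℕ) (hd : d ≠ 0) :
    (x ^ (((m : ℕ) : ℝ) / (d : ℝ))) ^ d = x ^ m := by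
  rw [← Real.rpow_natCast (x ^ (((m : ℕ) : ℝ) / (d : ℝ))) d, ← Real.rpow_mul hx,
    div_mul_cancel₀ _ (by exact_mod_cast hd), Real.rpow_natCast]

/-- **Quadrant-wise domination of the rate matrix by the proposal.**
Suppose `v_c ≤ m_F E_c` for all frequent colors (`E_c ≥ 1`) and `v_c ≤ m_I` for
all infrequent colors (`E_c < 1`).  Then, with `Λ_{cc'} = v_c v_{c'} Γ_{cc'}`
and `Γ = Θ⁽¹⁾ ⊗ ⋯ ⊗ Θ⁽ᵈ⁾`: if `c ∈ F, c' ∈ F` then `Λ_{cc'} ≤ Λ^(FF)_{cc'}`;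
if `c ∈ F, c' ∈ I` then `Λ_{cc'} ≤ Λ^(FI)_{cc'}`; if `c ∈ I, c' ∈ F` then
`Λ_{cc'} ≤ Λ^(IF)_{cc'}`; and if `c ∈ I, c' ∈ I` then `Λ_{cc'} ≤ Λ^(II)_{cc'}`. -/
theorem proposal_quadrant_domination (d n : ℕ) (hd : 1 ≤ d) (hn : 1 ≤ n)
    (θ : ℕ → ℕ → ℕ → ℝ) (hθ : ∀ k a b, 0 ≤ θ k a b)
    (μ : ℕ → ℝ) (hμ : ∀ k, μ k ∈ Set.Icc (0 : ℝ) 1)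
    (v : ℕ → ℕ) (mF mI : ℝ) (hmF : 0 ≤ mF) (hmI : 0 ≤ mI)
    (hF : ∀ c < 2 ^ d, 1 ≤ Ecol n d μ c → (v c : ℝ) ≤ mF * Ecol n d μ c)
    (hI : ∀ c < 2 ^ d, Ecol n d μ c < 1 → (v c : ℝ) ≤ mI)
    (c c' : ℕ) (hc : c < 2 ^ d) (hc' : c' < 2 ^ d) :
    (1 ≤ Ecol n d μ c → 1 ≤ Ecol n d μ c' →
        (v c : ℝ) * (v c' : ℝ) * kronFold θ d c c'
          ≤ kronFold (thetaFF d n μ θ mF) d c c') ∧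
    (1 ≤ Ecol n d μ c → Ecol n d μ c' < 1 →
        (v c : ℝ) * (v c' : ℝ) * kronFold θ d c c'
          ≤ kronFold (thetaFI d n μ θ mF mI) d c c') ∧
    (Ecol n d μ c < 1 → 1 ≤ Ecol n d μ c' →
        (v c : ℝ) * (v c' : ℝ) * kronFold θ d c c'
          ≤ kronFold (thetaIF d n μ θ mF mI) d c c') ∧
    (Ecol n d μ c < 1 → Ecol n d μ c' < 1 →
        (v c : ℝ) * (v c' : ℝ) * kronFold θ d c c'
          ≤ kronFold (thetaII d θ mI) d c c') := by
  set f : ℕ → ℕ → ℝ := fun k a => μ k ^ a * (1 - μ k) ^ (1 - a) with hf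
  set one : ℕ → ℕ → ℝ := fun _ _ => (1 : ℝ) with hone
  set P : ℕ → ℝ := fun c => ∏ k ∈ Finset.range d, f k (bitOf d k c) with hPdef
  have hE : ∀ c, Ecol n d μ c = (n : ℝ) * P c := fun c => rfl
  set K := kronFold θ d c c' with hKdef
  have hK : 0 ≤ K := kronFold_nonneg θ hθ d c c'
  have hv : (0:ℝ) ≤ v c := Nat.cast_nonneg _
  have hv' : (0:ℝ) ≤ v c' := Nat.cast_nonneg _
  have hd0 : d ≠ 0 := by omega
  have hn0 : (0:ℝ) ≤ (n:ℝ) := Nat.cast_nonneg _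
  have hOne : ∀ c, ∏ k ∈ Finset.range d, one k (bitOf d k c) = 1 := fun c => by
    simp [hone]
  refine ⟨fun h1 h2 => ?_, fun h1 h2 => ?_, fun h1 h2 => ?_, fun h1 h2 => ?_⟩
  · -- FF
    have hmat : thetaFF d n μ θ mF =
        fun k a b => ((n : ℝ) * mF) ^ ((2 : ℝ) / (d : ℝ)) * (f k a * f k b * θ k a b) := by
      funext k a b; simp only [thetaFF, hf]; try ring
    rw [hmat, kronFold_smul, kron_weight d f f θ c c' hc hc']
    rw [show ((2:ℝ)/(d:ℝ)) = (((2:ℕ):ℝ)/(d:ℝ)) by norm_num,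
      rpow_div_pow _ (mul_nonneg hn0 hmF) 2 d hd0]
    have hb : (v c : ℝ) * (v c' : ℝ) ≤ (mF * Ecol n d μ c) * (mF * Ecol n d μ c') :=
      mul_le_mul (hF c hc h1) (hF c' hc' h2) hv' (le_trans hv (hF c hc h1))
    refine le_trans (mul_le_mul_of_nonneg_right hb hK) (le_of_eq ?_)
    simp only [hE, hPdef, hKdef]; ring
  · -- FI
    have hmat : thetaFI d n μ θ mF mI =
        fun k a b => ((n : ℝ) * mF * mI) ^ ((1 : ℝ) / (d : ℝ)) *
          (f k a * one k b * θ k a b) := by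
      funext k a b; simp only [thetaFI, hf, hone]; try ring
    rw [hmat, kronFold_smul, kron_weight d f one θ c c' hc hc']
    simp only [hone, Finset.prod_const_one]
    rw [show ((1:ℝ)/(d:ℝ)) = (((1:ℕ):ℝ)/(d:ℝ)) by norm_num,
      rpow_div_pow _ (mul_nonneg (mul_nonneg hn0 hmF) hmI) 1 d hd0]
    have hb : (v c : ℝ) * (v c' : ℝ) ≤ (mF * Ecol n d μ c) * mI :=
      mul_le_mul (hF c hc h1) (hI c' hc' h2) hv' (le_trans hv (hF c hc h1))
    refine le_trans (mul_le_mul_of_nonneg_right hb hK) (le_of_eq ?_)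
    simp only [hE, hPdef, hKdef]; ring
  · -- IF
    have hmat : thetaIF d n μ θ mF mI =
        fun k a b => ((n : ℝ) * mI * mF) ^ ((1 : ℝ) / (d : ℝ)) *
          (one k a * f k b * θ k a b) := by
      funext k a b; simp only [thetaIF, hf, hone]; try ring
    rw [hmat, kronFold_smul, kron_weight d one f θ c c' hc hc']
    simp only [hone, Finset.prod_const_one]
    rw [show ((1:ℝ)/(d:ℝ)) = (((1:ℕ):ℝ)/(d:ℝ)) by norm_num,
      rpow_div_pow _ (mul_nonneg (mul_nonneg hn0 hmI) hmF) 1 d hd0]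
    have hb : (v c : ℝ) * (v c' : ℝ) ≤ mI * (mF * Ecol n d μ c') :=
      mul_le_mul (hI c hc h1) (hF c' hc' h2) hv' hmI
    refine le_trans (mul_le_mul_of_nonneg_right hb hK) (le_of_eq ?_)
    simp only [hE, hPdef, hKdef]; ring
  · -- II
    have hmat : thetaII d θ mI =
        fun k a b => mI ^ ((2 : ℝ) / (d : ℝ)) * (one k a * one k b * θ k a b) := by
      funext k a b; simp only [thetaII, hone]; try ring
    rw [hmat, kronFold_smul, kron_weight d one one θ c c' hc hc']
    simp only [hone, Finset.prod_const_one]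
    rw [show ((2:ℝ)/(d:ℝ)) = (((2:ℕ):ℝ)/(d:ℝ)) by norm_num,
      rpow_div_pow _ hmI 2 d hd0]
    have hb : (v c : ℝ) * (v c' : ℝ) ≤ mI * mI :=
      mul_le_mul (hI c hc h1) (hI c' hc' h2) hv' hmI
    refine le_trans (mul_le_mul_of_nonneg_right hb hK) (le_of_eq ?_)
    simp only [hKdef]; ring
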